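/- The AMS boolean linear system admits an operator solution by 4×4 complex matrices: there exists an injective map O : Fin 15 → Matrix (Fin 4) (Fin 4) ℂ such that for every m ∈ Fin 15, O m is Hermitian, (O m) * (O m) = 1, O m ≠ 1 and O m ≠ -1, and for every equation index j ∈ Fin 15, writing vars(j) = {m₁, m₂, m₃} (listed in increasing order), the three matrices O m₁, O m₂, O m₃ pairwise commute and O m₁ * O m₂ * O m₃ = (-1)^{par(j)} • 1 (so the product is the identity when par(j) = 0 and minus the identity when par(j) = 1). -/

import Mathlib

/-- The variable index set of each of the 15 AMS equations. -/
def vars : Fin 15 → Finset (Fin 15)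
  | 0 => {0, 3, 6}
  | 1 => {1, 3, 7}
  | 2 => {2, 3, 8}
  | 3 => {0, 4, 9}
  | 4 => {1, 4, 10}
  | 5 => {2, 4, 11}
  | 6 => {0, 5, 12}
  | 7 => {1, 5, 13}
  | 8 => {2, 5, 14}
  | 9 => {6, 11, 13}
  | 10 => {8, 10, 12}
  | 11 => {7, 9, 14}
  | 12 => {6, 10, 14}
  | 13 => {7, 11, 12}
  | 14 => {8, 9, 13}

/-- The parity of each of the 15 AMS equations. -/
def par : Fin 15 → ZMod 2
  | 12 => 1
  | 13 => 1
  | 14 => 1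
  | _ => 0


open GaussianInt Matrix in
private def G : Fin 15 → Matrix (Fin 4) (Fin 4) GaussianInt
  | 0 => !![0,1,0,0; 1,0,0,0; 0,0,0,1; 0,0,1,0]
  | 1 => !![0,⟨0,-1⟩,0,0; ⟨0,1⟩,0,0,0; 0,0,0,⟨0,-1⟩; 0,0,⟨0,1⟩,0]
  | 2 => !![1,0,0,0; 0,-1,0,0; 0,0,1,0; 0,0,0,-1]
  | 3 => !![0,0,1,0; 0,0,0,1; 1,0,0,0; 0,1,0,0]
  | 4 => !![0,0,⟨0,-1⟩,0; 0,0,0,⟨0,-1⟩; ⟨0,1⟩,0,0,0; 0,⟨0,1⟩,0,0]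
  | 5 => !![1,0,0,0; 0,1,0,0; 0,0,-1,0; 0,0,0,-1]
  | 6 => !![0,0,0,1; 0,0,1,0; 0,1,0,0; 1,0,0,0]
  | 7 => !![0,0,0,⟨0,-1⟩; 0,0,⟨0,1⟩,0; 0,⟨0,-1⟩,0,0; ⟨0,1⟩,0,0,0]
  | 8 => !![0,0,1,0; 0,0,0,-1; 1,0,0,0; 0,-1,0,0]
  | 9 => !![0,0,0,⟨0,-1⟩; 0,0,⟨0,-1⟩,0; 0,⟨0,1⟩,0,0; ⟨0,1⟩,0,0,0]
  | 10 => !![0,0,0,-1; 0,0,1,0; 0,1,0,0; -1,0,0,0]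
  | 11 => !![0,0,⟨0,-1⟩,0; 0,0,0,⟨0,1⟩; ⟨0,1⟩,0,0,0; 0,⟨0,-1⟩,0,0]
  | 12 => !![0,1,0,0; 1,0,0,0; 0,0,0,-1; 0,0,-1,0]
  | 13 => !![0,⟨0,-1⟩,0,0; ⟨0,1⟩,0,0,0; 0,0,0,⟨0,1⟩; 0,0,⟨0,-1⟩,0]
  | 14 => !![1,0,0,0; 0,-1,0,0; 0,0,-1,0; 0,0,0,1]

private theorem hGinj : ∀ a b, G a = G b → a = b := by decide

private theorem hGmul : ∀ m, G m * G m = 1 := by decide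

private theorem hGne1 : ∀ m, G m ≠ 1 := by decide

private theorem hGnen1 : ∀ m, G m ≠ -1 := by decide

open Matrix in
private theorem hGstar : ∀ m, (G m)ᴴ = G m := by decide

private theorem hGcomm : ∀ j : Fin 15, ∀ m₁ ∈ vars j, ∀ m₂ ∈ vars j,
    G m₁ * G m₂ = G m₂ * G m₁ := by decide

private theorem sortTriple (a b c : Fin 15) (hab : a < b) (hbc : b < c) :
    Finset.sort ({a, b, c} : Finset (Fin 15)) (· ≤ ·) = [a, b, c] := by
  have h1 : ∀ x ∈ ({b, c} : Finset (Fin 15)), a ≤ x := by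
    intro x hx
    simp only [Finset.mem_insert, Finset.mem_singleton] at hx
    rcases hx with rfl | rfl
    · exact hab.le
    · exact (hab.trans hbc).le
  have h2 : a ∉ ({b, c} : Finset (Fin 15)) := by
    simp only [Finset.mem_insert, Finset.mem_singleton]
    push_neg
    exact ⟨hab.ne, (hab.trans hbc).ne⟩
  have h3 : ∀ x ∈ ({c} : Finset (Fin 15)), b ≤ x := by
    intro x hx
    simp only [Finset.mem_singleton] at hx
    subst hx; exact hbc.le
  have h4 : b ∉ ({c} : Finset (Fin 15)) := by
    simp only [Finset.mem_singleton]; exact hbc.ne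
  rw [Finset.sort_insert _ h1 h2, Finset.sort_insert _ h3 h4, Finset.sort_singleton]

private theorem hGprod : ∀ j : Fin 15,
    (((vars j).sort (· ≤ ·)).map G).prod = (if par j = 0 then 1 else -1) := by
  intro j
  fin_cases j <;>
    · simp only [vars]
      rw [sortTriple _ _ _ (by decide) (by decide)]
      simp only [List.map_cons, List.map_nil, List.prod_cons, List.prod_nil, mul_one]
      decide

open Matrix

private theorem hparne : ∀ j : Fin 15, par j ≠ 0 → par j = 1 := by decide


/-- The AMS boolean linear system admits an operator solution by two-qubit
observables: an injective assignment of Hermitian involutive 4×4 complex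
matrices (other than `±1`) to the 15 variables such that, for each equation
`j`, the matrices assigned to `vars j` (taken in increasing order of index)
pairwise commute and multiply to `(-1) ^ par j` times the identity. -/
theorem ams_operator_solution :
    ∃ O : Fin 15 → Matrix (Fin 4) (Fin 4) ℂ,
      Function.Injective O ∧
      (∀ m, (O m).IsHermitian) ∧
      (∀ m, O m * O m = 1) ∧
      (∀ m, O m ≠ 1) ∧
      (∀ m, O m ≠ -1) ∧
      (∀ j : Fin 15, ∀ m₁ ∈ vars j, ∀ m₂ ∈ vars j, Commute (O m₁) (O m₂)) ∧
      (∀ j : Fin 15,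
        (((vars j).sort (· ≤ ·)).map O).prod =
          ((-1 : ℂ) ^ (par j).val) • (1 : Matrix (Fin 4) (Fin 4) ℂ)) := by
  classical
  set f : Matrix (Fin 4) (Fin 4) GaussianInt →+* Matrix (Fin 4) (Fin 4) ℂ :=
    GaussianInt.toComplex.mapMatrix with hf
  have hfinj : Function.Injective f := by
    intro M N h
    have h2 : M.map GaussianInt.toComplex = N.map GaussianInt.toComplex := h
    exact Matrix.ext fun i j =>
      GaussianInt.toComplex_inj.mp (congrFun (congrFun h2 i) j)
  refine ⟨fun m => f (G m), ?_, ?_, ?_, ?_, ?_, ?_, ?_⟩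
  · intro a b h
    exact hGinj a b (hfinj h)
  · intro m
    show (f (G m))ᴴ = f (G m)
    have hsemi : Function.Semiconj (GaussianInt.toComplex : GaussianInt → ℂ) star star := by
      intro x
      simp [GaussianInt.toComplex_star x]
    calc (f (G m))ᴴ = ((G m).map GaussianInt.toComplex)ᴴ := rfl
      _ = (G m)ᴴ.map GaussianInt.toComplex :=
        (Matrix.conjTranspose_map GaussianInt.toComplex hsemi).symm
      _ = (G m).map GaussianInt.toComplex := by rw [hGstar]
      _ = f (G m) := rfl
  · intro m
    show f (G m) * f (G m) = 1
    rw [← _root_.map_mul, hGmul, _root_.map_one]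
  · intro m h
    exact hGne1 m (hfinj ((show f (G m) = 1 from h).trans (_root_.map_one f).symm))
  · intro m h
    refine hGnen1 m (hfinj ((show f (G m) = -1 from h).trans ?_))
    rw [_root_.map_neg, _root_.map_one]
  · intro j m₁ h₁ m₂ h₂
    show f (G m₁) * f (G m₂) = f (G m₂) * f (G m₁)
    rw [← _root_.map_mul, ← _root_.map_mul, hGcomm j m₁ h₁ m₂ h₂]
  · intro j
    have : (((vars j).sort (· ≤ ·)).map fun m => f (G m)).prod =
        f ((((vars j).sort (· ≤ ·)).map G).prod) := by
      rw [map_list_prod, List.map_map]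
      rfl
    rw [this, hGprod j]
    by_cases h : par j = 0
    · rw [if_pos h, h, _root_.map_one]
      simp
    · rw [if_neg h, hparne j h, _root_.map_neg, _root_.map_one]
      simp [ZMod.val_one]
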